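/- Let P ⊆ ℝ⁴ be the convex hull of the five points (0,0,0,0), (1,0,0,0), (0,1,0,0), (0,0,1,0), (1,1,1,3). Then the point (1,1,1,1) lies in 3P = {3x : x ∈ P}, but there do not exist a ∈ P ∩ ℤ⁴ and b ∈ 2P ∩ ℤ⁴ with a + b = (1,1,1,1). -/

import Mathlib

open Pointwise

/-- The polytope of Example 4.8: the convex hull of
`(0,0,0,0), (1,0,0,0), (0,1,0,0), (0,0,1,0), (1,1,1,3)` in `ℝ⁴`. -/
noncomputable def Pex : Set (Fin 4 → ℝ) :=
  convexHull ℝ {![0,0,0,0], ![1,0,0,0], ![0,1,0,0], ![0,0,1,0], ![1,1,1,3]}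

/-- Halfspace description (outer bound) for `Pex`. -/
def Kex : Set (Fin 4 → ℝ) :=
  {x | 0 ≤ x 3 ∧ x 3 ≤ 3 ∧ x 3 ≤ 3 * x 0 ∧ x 3 ≤ 3 * x 1 ∧ x 3 ≤ 3 * x 2 ∧
    3 * (x 0 + x 1 + x 2) ≤ 3 + 2 * x 3}

lemma convex_Kex : Convex ℝ Kex := by
  intro x hx y hy a b ha hb hab
  simp only [Kex, Set.mem_setOf_eq] at *
  obtain ⟨h1, h2, h3, h4, h5, h6⟩ := hx
  obtain ⟨g1, g2, g3, g4, g5, g6⟩ := hy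
  simp only [Pi.add_apply, Pi.smul_apply, smul_eq_mul]
  refine ⟨?_, ?_, ?_, ?_, ?_, ?_⟩ <;> nlinarith [mul_nonneg ha h1, mul_nonneg hb g1]

lemma Pex_subset_Kex : Pex ⊆ Kex := by
  apply convexHull_min _ convex_Kex
  intro v hv
  simp only [Set.mem_insert_iff, Set.mem_singleton_iff] at hv
  rcases hv with h | h | h | h | h <;> subst h <;>
    simp only [Kex, Set.mem_setOf_eq, Matrix.cons_val_zero, Matrix.cons_val_one,
      Matrix.head_cons, Matrix.cons_val_two, Matrix.tail_cons, Matrix.cons_val_three] <;>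
    norm_num

/-- Example 4.8: `(1,1,1,1)` lies in `3P`, but cannot be written as the sum of a lattice
point of `P` and a lattice point of `2P`. -/
theorem example_non_vanishing :
    (![1,1,1,1] : Fin 4 → ℝ) ∈ (3 : ℝ) • Pex ∧
    ¬ ∃ a b : Fin 4 → ℤ,
        (fun i => (a i : ℝ)) ∈ Pex ∧ (fun i => (b i : ℝ)) ∈ (2 : ℝ) • Pex ∧
        a + b = ![1,1,1,1] := by
  constructor
  · -- (1/3, 1/3, 1/3, 1/3) ∈ Pex
    rw [Set.mem_smul_set]
    refine ⟨![1/3, 1/3, 1/3, 1/3], ?_, ?_⟩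
    · have hmem := Finset.centerMass_mem_convexHull (Finset.univ : Finset (Fin 5))
        (w := (![2/9, 2/9, 2/9, 2/9, 1/9] : Fin 5 → ℝ))
        (z := ![![0,0,0,0], ![1,0,0,0], ![0,1,0,0], ![0,0,1,0], ![1,1,1,3]])
        (s := ({![0,0,0,0], ![1,0,0,0], ![0,1,0,0], ![0,0,1,0], ![1,1,1,3]} :
          Set (Fin 4 → ℝ)))
        (by intro i _; fin_cases i <;> norm_num)
        (by rw [Fin.sum_univ_five]; norm_num [Matrix.cons_val_two, Matrix.cons_val_three, Matrix.cons_val_four])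
        (by intro i _; fin_cases i <;> simp)
      have hsum : ∑ i, (![2/9, 2/9, 2/9, 2/9, 1/9] : Fin 5 → ℝ) i = 1 := by
        rw [Fin.sum_univ_five]; norm_num [Matrix.cons_val_two, Matrix.cons_val_three, Matrix.cons_val_four]
      rw [Finset.centerMass_eq_of_sum_1 _ _ hsum] at hmem
      convert hmem using 1
      · rfl
      funext j
      simp only [Finset.sum_apply, Pi.smul_apply, smul_eq_mul, Fin.sum_univ_five]
      fin_cases j <;> norm_num [Matrix.vecHead, Matrix.vecTail, Matrix.cons_val_two, Matrix.cons_val_three, Matrix.cons_val_four]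
    · funext j
      fin_cases j <;> norm_num [Matrix.vecHead, Matrix.vecTail]
  · rintro ⟨a, b, ha, hb, hab⟩
    have haK := Pex_subset_Kex ha
    rw [Set.mem_smul_set] at hb
    obtain ⟨x, hx, hxb⟩ := hb
    have hxK := Pex_subset_Kex hx
    simp only [Kex, Set.mem_setOf_eq] at haK hxK
    obtain ⟨h1, h2, h3, h4, h5, h6⟩ := haK
    obtain ⟨g1, g2, g3, g4, g5, g6⟩ := hxK
    -- b i = 2 * x i
    have hbx : ∀ i, (b i : ℝ) = 2 * x i := by
      intro i
      have := congrFun hxb i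
      simp only [Pi.smul_apply, smul_eq_mul] at this
      linarith [this]
    -- integer equations from a + b = (1,1,1,1)
    have hab0 : a 0 + b 0 = 1 := by have := congrFun hab 0; simpa using this
    have hab1 : a 1 + b 1 = 1 := by have := congrFun hab 1; simpa using this
    have hab2 : a 2 + b 2 = 1 := by have := congrFun hab 2; simpa using this
    have hab3 : a 3 + b 3 = 1 := by have := congrFun hab 3; simpa using this
    -- integer inequalities for a
    have ia1 : (0 : ℤ) ≤ a 3 := by exact_mod_cast h1
    have ia2 : a 3 ≤ 3 := by exact_mod_cast h2
    have ia3 : a 3 ≤ 3 * a 0 := by exact_mod_cast h3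
    have ia4 : a 3 ≤ 3 * a 1 := by exact_mod_cast h4
    have ia5 : a 3 ≤ 3 * a 2 := by exact_mod_cast h5
    have ia6 : 3 * (a 0 + a 1 + a 2) ≤ 3 + 2 * a 3 := by exact_mod_cast h6
    -- integer inequalities for b (from x ∈ Kex scaled by 2)
    have ib1 : (0 : ℤ) ≤ b 3 := by
      have : (0 : ℝ) ≤ (b 3 : ℝ) := by rw [hbx 3]; linarith
      exact_mod_cast this
    have ib2 : b 3 ≤ 6 := by
      have : (b 3 : ℝ) ≤ 6 := by rw [hbx 3]; linarith
      exact_mod_cast this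
    have ib3 : b 3 ≤ 3 * b 0 := by
      have : (b 3 : ℝ) ≤ 3 * (b 0 : ℝ) := by rw [hbx 3, hbx 0]; linarith
      exact_mod_cast this
    have ib4 : b 3 ≤ 3 * b 1 := by
      have : (b 3 : ℝ) ≤ 3 * (b 1 : ℝ) := by rw [hbx 3, hbx 1]; linarith
      exact_mod_cast this
    have ib5 : b 3 ≤ 3 * b 2 := by
      have : (b 3 : ℝ) ≤ 3 * (b 2 : ℝ) := by rw [hbx 3, hbx 2]; linarith
      exact_mod_cast this
    have ib6 : 3 * (b 0 + b 1 + b 2) ≤ 6 + 2 * b 3 := by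
      have : 3 * ((b 0 : ℝ) + b 1 + b 2) ≤ 6 + 2 * (b 3 : ℝ) := by
        rw [hbx 0, hbx 1, hbx 2, hbx 3]; linarith
      exact_mod_cast this
    have hb3 : b 3 = 0 ∨ b 3 = 1 := by omega
    rcases hb3 with h | h <;> omega
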